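/- Let w' ∈ S_n and let T_{i,j} and T_{k,l} be two commuting transpositions ({i,j} ∩ {k,l} = ∅). If ℓ(w'·T_{i,j}) = ℓ(w') + 1 and ℓ(w'·T_{i,j}·T_{k,l}) = ℓ(w') + 2, then also ℓ(w'·T_{k,l}) = ℓ(w') + 1 and ℓ(w'·T_{k,l}·T_{i,j}) = ℓ(w') + 2. -/

import Mathlib

open Equiv

/-- Number of inversions (Coxeter length) of a permutation of ℕ. -/
noncomputable def invNum (w : Perm ℕ) : ℕ :=
  Set.ncard {p : ℕ × ℕ | p.1 < p.2 ∧ w p.2 < w p.1}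

/-- Strong Bruhat order on (finitary) permutations of ℕ. -/
def BruhatLE (x y : Perm ℕ) : Prop :=
  Relation.ReflTransGen
    (fun u v => (∃ a b : ℕ, a < b ∧ v = u * Equiv.swap a b) ∧ invNum u < invNum v) x y

def BruhatLT (x y : Perm ℕ) : Prop := BruhatLE x y ∧ x ≠ y

/-- w avoids the pattern 3412. -/
def Avoids3412 (w : Perm ℕ) : Prop :=
  ¬ ∃ a b c d : ℕ, a < b ∧ b < c ∧ c < d ∧ w c < w d ∧ w d < w a ∧ w a < w b

/-- w avoids the pattern 4231. -/
def Avoids4231 (w : Perm ℕ) : Prop :=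
  ¬ ∃ a b c d : ℕ, a < b ∧ b < c ∧ c < d ∧ w d < w b ∧ w b < w c ∧ w c < w a

def invSet (w : Perm ℕ) : Set (ℕ × ℕ) := {p | p.1 < p.2 ∧ w p.2 < w p.1}

lemma invNum_def (w : Perm ℕ) : invNum w = (invSet w).ncard := rfl

def rev (a b : ℕ) : Set (ℕ × ℕ) :=
  {p | p.1 < p.2 ∧ Equiv.swap a b p.2 < Equiv.swap a b p.1}

lemma invSet_mul_swap (w : Perm ℕ) (a b : ℕ) :
    invSet (w * Equiv.swap a b) =
      (Equiv.prodCongr (Equiv.swap a b) (Equiv.swap a b)) ⁻¹'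
        ((invSet w \ rev a b) ∪ (Prod.swap '' (rev a b \ invSet w))) := by
  ext ⟨p, q⟩
  simp only [invSet, rev, Set.mem_preimage, Set.mem_union, Set.mem_diff, Set.mem_setOf_eq,
    prodCongr_apply, Prod.map, Set.mem_image, Perm.mul_apply, Prod.mk.injEq, Prod.exists,
    Prod.swap_prod_mk, Equiv.swap_apply_self]
  constructor
  · rintro ⟨hpq, hw⟩
    rcases lt_trichotomy (Equiv.swap a b p) (Equiv.swap a b q) with h | h | h
    · exact Or.inl ⟨⟨h, hw⟩, fun h' => absurd h'.2 (by omega)⟩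
    · exact absurd ((Equiv.swap a b).injective h) (by omega)
    · exact Or.inr ⟨Equiv.swap a b q, Equiv.swap a b p,
        ⟨⟨h, by simpa using hpq⟩, fun h' => absurd h'.2 (not_lt.2 hw.le)⟩,
        rfl, rfl⟩
  · rintro (⟨⟨h1, h2⟩, h3⟩ | ⟨x, y, ⟨⟨hxy, hs⟩, hns⟩, hx, hy⟩)
    · refine ⟨?_, h2⟩
      by_contra hc
      rcases lt_or_eq_of_le (not_lt.1 hc) with h | h
      · exact h3 ⟨h1, h⟩
      · rw [h] at h1; exact absurd h1 (lt_irrefl _)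
    · have hp : Equiv.swap a b y = p := by rw [hx]; simp
      have hq : Equiv.swap a b x = q := by rw [hy]; simp
      subst hp hq
      simp only [Equiv.swap_apply_self] at hs ⊢
      refine ⟨hs, ?_⟩
      rcases lt_trichotomy (w x) (w y) with h | h | h
      · exact h
      · exact absurd (w.injective h) (by omega)
      · exact absurd ⟨hxy, h⟩ hns

lemma rev_subset (a b : ℕ) (hab : a < b) : rev a b ⊆ Set.Icc a b ×ˢ Set.Icc a b := by
  rintro ⟨p, q⟩ ⟨hpq, hs⟩
  rw [Equiv.swap_apply_def, Equiv.swap_apply_def] at hs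
  simp only [Set.mem_prod, Set.mem_Icc]
  split_ifs at hs <;> omega

lemma rev_finite (a b : ℕ) : (rev a b).Finite := by
  rcases lt_trichotomy a b with h | h | h
  · exact ((Set.finite_Icc a b).prod (Set.finite_Icc a b)).subset (rev_subset a b h)
  · subst h
    have : rev a a = ∅ := by
      ext ⟨p, q⟩; simp [rev]; omega
    simp [this]
  · have : rev a b = rev b a := by
      unfold rev; rw [Equiv.swap_comm]
    rw [this]
    exact ((Set.finite_Icc b a).prod (Set.finite_Icc b a)).subset (rev_subset b a h)

lemma finite_of_finite_mul_swap (w : Perm ℕ) (a b : ℕ)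
    (h : (invSet (w * Equiv.swap a b)).Finite) : (invSet w).Finite := by
  set e := Equiv.prodCongr (Equiv.swap a b) (Equiv.swap a b)
  have hU : (invSet w \ rev a b) ∪ (Prod.swap '' (rev a b \ invSet w)) =
      e '' invSet (w * Equiv.swap a b) := by
    rw [invSet_mul_swap, Set.image_preimage_eq _ e.surjective]
  have hsub : invSet w ⊆ (e '' invSet (w * Equiv.swap a b)) ∪ rev a b := by
    intro p hp
    by_cases hr : p ∈ rev a b
    · exact Or.inr hr
    · exact Or.inl (hU ▸ Or.inl ⟨hp, hr⟩)
  exact ((h.image e).union (rev_finite a b)).subset hsub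

lemma finite_mul_swap (w : Perm ℕ) (a b : ℕ)
    (h : (invSet w).Finite) : (invSet (w * Equiv.swap a b)).Finite := by
  have := finite_of_finite_mul_swap (w * Equiv.swap a b) a b
  rw [mul_assoc, Equiv.swap_mul_self, mul_one] at this
  exact this h

lemma invNum_mul_swap (w : Perm ℕ) (a b : ℕ) (hfin : (invSet w).Finite) :
    invNum (w * Equiv.swap a b) =
      (invSet w \ rev a b).ncard + (rev a b \ invSet w).ncard := by
  set e := Equiv.prodCongr (Equiv.swap a b) (Equiv.swap a b)
  rw [invNum_def, invSet_mul_swap]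
  have hpre : (e : (ℕ × ℕ) ≃ (ℕ × ℕ)) ⁻¹'
      ((invSet w \ rev a b) ∪ (Prod.swap '' (rev a b \ invSet w))) =
      e.symm '' ((invSet w \ rev a b) ∪ (Prod.swap '' (rev a b \ invSet w))) := by
    rw [Equiv.image_eq_preimage_symm]
    simp
  rw [hpre, Set.ncard_image_of_injective _ e.symm.injective]
  have hdisj : Disjoint (invSet w \ rev a b) (Prod.swap '' (rev a b \ invSet w)) := by
    rw [Set.disjoint_left]
    rintro ⟨p, q⟩ ⟨⟨hpq, _⟩, _⟩ ⟨⟨x, y⟩, ⟨⟨hxy, _⟩, _⟩, hswap⟩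
    have : y = p ∧ x = q := by
      simpa [Prod.ext_iff] using hswap
    omega
  rw [Set.ncard_union_eq hdisj hfin.diff
    (((rev_finite a b).diff).image _),
    Set.ncard_image_of_injective _ Prod.swap_injective]

def revF (a b : ℕ) : Finset (ℕ × ℕ) :=
  insert (a, b) (((Finset.Ioo a b).image fun m => (a, m)) ∪
    ((Finset.Ioo a b).image fun m => (m, b)))

lemma mem_revF (a b : ℕ) (hab : a < b) (p : ℕ × ℕ) : p ∈ revF a b ↔ p ∈ rev a b := by
  obtain ⟨x, y⟩ := p
  simp only [revF, Finset.mem_insert, Finset.mem_union, Finset.mem_image, Finset.mem_Ioo,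
    Prod.mk.injEq, rev, Set.mem_setOf_eq]
  rw [Equiv.swap_apply_def, Equiv.swap_apply_def]
  constructor
  · rintro (⟨rfl, rfl⟩ | ⟨m, hm, rfl, rfl⟩ | ⟨m, hm, rfl, rfl⟩) <;> split_ifs <;> omega
  · rintro ⟨hxy, hs⟩
    by_cases hxa : x = a
    · subst hxa
      by_cases hyb : y = b
      · exact Or.inl ⟨rfl, hyb⟩
      · exact Or.inr (Or.inl ⟨y, by split_ifs at hs <;> omega, rfl, rfl⟩)
    · have hyb : y = b := by by_contra hyb; split_ifs at hs <;> omega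
      subst hyb
      exact Or.inr (Or.inr ⟨x, by split_ifs at hs <;> omega, rfl, rfl⟩)

lemma rev_coe (a b : ℕ) (hab : a < b) : rev a b = ↑(revF a b) := by
  ext p
  rw [Finset.mem_coe, mem_revF a b hab]

lemma aux_inj_left (a : ℕ) : Function.Injective (fun m : ℕ => (a, m)) := by
  intro x y h
  simpa using h

lemma aux_inj_right (b : ℕ) : Function.Injective (fun m : ℕ => (m, b)) := by
  intro x y h
  simpa using h

lemma aux_disj (a b : ℕ) (s t : Finset ℕ) (hs : ∀ m ∈ s, a < m) (ht : ∀ m ∈ t, a < m) :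
    Disjoint (s.image fun m => (a, m)) (t.image fun m => (m, b)) := by
  rw [Finset.disjoint_left]
  rintro ⟨x, y⟩ hx hy
  simp only [Finset.mem_image, Prod.mk.injEq] at hx hy
  obtain ⟨m, hm, rfl, rfl⟩ := hx
  obtain ⟨m', hm', h1, h2⟩ := hy
  exact absurd h1 (by have := ht m' hm'; omega)

lemma aux_ab_not_mem (a b : ℕ) (s t : Finset ℕ) (hs : ∀ m ∈ s, m < b) (ht : ∀ m ∈ t, a < m) :
    (a, b) ∉ (s.image fun m => (a, m)) ∪ (t.image fun m => (m, b)) := by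
  intro h
  simp only [Finset.mem_union, Finset.mem_image, Prod.mk.injEq] at h
  rcases h with ⟨m, hm, h1, h2⟩ | ⟨m, hm, h1, h2⟩
  · exact absurd (hs m hm) (by omega)
  · exact absurd (ht m hm) (by omega)

lemma ncard_rev (a b : ℕ) (hab : a < b) :
    (rev a b).ncard = 2 * (Finset.Ioo a b).card + 1 := by
  rw [rev_coe a b hab, Set.ncard_coe_finset, revF,
    Finset.card_insert_of_notMem
      (aux_ab_not_mem a b _ _ (fun m hm => (Finset.mem_Ioo.1 hm).2)
        (fun m hm => (Finset.mem_Ioo.1 hm).1)),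
    Finset.card_union_of_disjoint
      (aux_disj a b _ _ (fun m hm => (Finset.mem_Ioo.1 hm).1)
        (fun m hm => (Finset.mem_Ioo.1 hm).1)),
    Finset.card_image_of_injective _ (aux_inj_left a),
    Finset.card_image_of_injective _ (aux_inj_right b)]
  ring

lemma ncard_inter_rev (w : Perm ℕ) (a b : ℕ) (hab : a < b) :
    (invSet w ∩ rev a b).ncard =
      ((Finset.Ioo a b).filter fun m => w m < w a).card +
      ((Finset.Ioo a b).filter fun m => w b < w m).card +
      (if w b < w a then 1 else 0) := by
  have hset : invSet w ∩ rev a b = ↑((revF a b).filter fun p => w p.2 < w p.1) := by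
    ext p
    simp only [Set.mem_inter_iff, Finset.coe_filter, Set.mem_setOf_eq, mem_revF a b hab]
    unfold invSet rev
    simp only [Set.mem_setOf_eq]
    tauto
  have e1 : ((((Finset.Ioo a b).image fun m => (a, m)) ∪
        ((Finset.Ioo a b).image fun m => (m, b))).filter fun p => w p.2 < w p.1).card
      = ((Finset.Ioo a b).filter fun m => w m < w a).card +
        ((Finset.Ioo a b).filter fun m => w b < w m).card := by
    rw [Finset.filter_union, Finset.filter_image, Finset.filter_image,
      Finset.card_union_of_disjoint
        (aux_disj a b _ _ (fun m hm => (Finset.mem_Ioo.1 (Finset.mem_filter.1 hm).1).1)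
          (fun m hm => (Finset.mem_Ioo.1 (Finset.mem_filter.1 hm).1).1)),
      Finset.card_image_of_injective _ (aux_inj_left a),
      Finset.card_image_of_injective _ (aux_inj_right b)]
  rw [hset, Set.ncard_coe_finset, revF, Finset.filter_insert]
  split_ifs with hba
  · have hnm : (a, b) ∉ (((Finset.Ioo a b).image fun m => (a, m)) ∪
        ((Finset.Ioo a b).image fun m => (m, b))).filter fun p => w p.2 < w p.1 :=
      fun hmem => aux_ab_not_mem a b _ _
        (fun m hm => (Finset.mem_Ioo.1 hm).2)
        (fun m hm => (Finset.mem_Ioo.1 hm).1) (Finset.mem_filter.1 hmem).1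
    rw [Finset.card_insert_of_notMem hnm, e1]
  · rw [e1]
    omega

lemma master (w : Perm ℕ) (a b : ℕ) (hab : a < b) (hfin : (invSet w).Finite) :
    invNum (w * Equiv.swap a b) +
      2 * (((Finset.Ioo a b).filter fun m => w m < w a).card +
        ((Finset.Ioo a b).filter fun m => w b < w m).card +
        (if w b < w a then 1 else 0)) =
    invNum w + 2 * (Finset.Ioo a b).card + 1 := by
  have h1 := invNum_mul_swap w a b hfin
  have h2 : (invSet w ∩ rev a b).ncard + (invSet w \ rev a b).ncard = invNum w :=
    Set.ncard_inter_add_ncard_diff_eq_ncard (invSet w) (rev a b) hfin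
  have h3 : (rev a b ∩ invSet w).ncard + (rev a b \ invSet w).ncard = (rev a b).ncard :=
    Set.ncard_inter_add_ncard_diff_eq_ncard _ _ (rev_finite a b)
  rw [Set.inter_comm] at h3
  have h4 := ncard_rev a b hab
  have h5 := ncard_inter_rev w a b hab
  split_ifs at h5 ⊢ <;> omega

lemma swap_step_iff (w : Perm ℕ) (a b : ℕ) (hab : a < b) (hfin : (invSet w).Finite) :
    invNum (w * Equiv.swap a b) = invNum w + 1 ↔
      w a < w b ∧ ∀ m, a < m → m < b → w m < w a ∨ w b < w m := by
  have hM := master w a b hab hfin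
  set P1 := (Finset.Ioo a b).filter (fun m => w m < w a) with hP1
  set P2 := (Finset.Ioo a b).filter (fun m => w b < w m) with hP2
  have hwab : w a ≠ w b := fun h => absurd (w.injective h) (by omega)
  have hsub : P1 ∪ P2 ⊆ Finset.Ioo a b :=
    Finset.union_subset (Finset.filter_subset _ _) (Finset.filter_subset _ _)
  have hunion : w a < w b → (P1 ∪ P2).card = P1.card + P2.card := by
    intro hw
    refine Finset.card_union_of_disjoint ?_
    rw [Finset.disjoint_left]
    intro m hm1 hm2
    have := (Finset.mem_filter.1 hm1).2
    have := (Finset.mem_filter.1 hm2).2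
    omega
  have hcov : w b < w a ∨ (∀ m, a < m → m < b → w m < w a ∨ w b < w m) →
      Finset.Ioo a b ⊆ P1 ∪ P2 := by
    intro hc m hm
    obtain ⟨hma, hmb⟩ := Finset.mem_Ioo.1 hm
    have hne1 : w m ≠ w a := fun h => absurd (w.injective h) (by omega)
    have hne2 : w m ≠ w b := fun h => absurd (w.injective h) (by omega)
    rcases hc with hc | hc
    · rcases lt_or_ge (w m) (w a) with h' | h'
      · exact Finset.mem_union_left _ (Finset.mem_filter.2 ⟨hm, h'⟩)
      · exact Finset.mem_union_right _ (Finset.mem_filter.2 ⟨hm, by omega⟩)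
    · rcases hc m hma hmb with h' | h'
      · exact Finset.mem_union_left _ (Finset.mem_filter.2 ⟨hm, h'⟩)
      · exact Finset.mem_union_right _ (Finset.mem_filter.2 ⟨hm, h'⟩)
  constructor
  · intro h
    rw [h] at hM
    have hwab2 : w a < w b := by
      by_contra hc
      have hba : w b < w a := by omega
      have hc1 := Finset.card_le_card (hcov (Or.inl hba))
      have hle := Finset.card_union_le P1 P2
      rw [if_pos hba] at hM
      omega
    refine ⟨hwab2, ?_⟩
    rw [if_neg (by omega : ¬ w b < w a)] at hM
    have hu := hunion hwab2
    have heq : P1 ∪ P2 = Finset.Ioo a b :=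
      Finset.eq_of_subset_of_card_le hsub (by omega)
    intro m hma hmb
    have hm : m ∈ P1 ∪ P2 := heq ▸ Finset.mem_Ioo.2 ⟨hma, hmb⟩
    rcases Finset.mem_union.1 hm with h' | h'
    · exact Or.inl (Finset.mem_filter.1 h').2
    · exact Or.inr (Finset.mem_filter.1 h').2
  · rintro ⟨hw, hcond⟩
    rw [if_neg (by omega : ¬ w b < w a)] at hM
    have hu := hunion hw
    have hc1 := Finset.card_le_card (hcov (Or.inr hcond))
    have hc2 := Finset.card_le_card hsub
    omega

lemma finite_of_step (w : Perm ℕ) (a b : ℕ) (hab : a < b)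
    (h : invNum (w * Equiv.swap a b) = invNum w + 1) : (invSet w).Finite := by
  by_contra hinf
  have hinf2 : ¬ (invSet (w * Equiv.swap a b)).Finite :=
    fun hf => hinf (finite_of_finite_mul_swap w a b hf)
  rw [invNum_def, invNum_def, Set.Infinite.ncard hinf, Set.Infinite.ncard hinf2] at h
  omega

/-- Saturated chains of length two through commuting transpositions can be
traversed in either order. -/
theorem stmt10 (w' : Perm ℕ) (i j k l : ℕ) (hij : i < j) (hkl : k < l)
    (h1 : i ≠ k) (h2 : i ≠ l) (h3 : j ≠ k) (h4 : j ≠ l)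
    (hstep1 : invNum (w' * Equiv.swap i j) = invNum w' + 1)
    (hstep2 : invNum (w' * Equiv.swap i j * Equiv.swap k l) = invNum w' + 2) :
    invNum (w' * Equiv.swap k l) = invNum w' + 1 ∧
      invNum (w' * Equiv.swap k l * Equiv.swap i j) = invNum w' + 2 := by
  have hfinU : (invSet w').Finite := finite_of_step w' i j hij hstep1
  have hfinU1 : (invSet (w' * Equiv.swap i j)).Finite := finite_mul_swap w' i j hfinU
  have hfinU2 : (invSet (w' * Equiv.swap k l)).Finite := finite_mul_swap w' k l hfinU
  obtain ⟨hvij, hcij⟩ := (swap_step_iff w' i j hij hfinU).1 hstep1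
  have hstep2' : invNum (w' * Equiv.swap i j * Equiv.swap k l) =
      invNum (w' * Equiv.swap i j) + 1 := by omega
  obtain ⟨hvkl', hckl'⟩ := (swap_step_iff (w' * Equiv.swap i j) k l hkl hfinU1).1 hstep2'
  have emu : ∀ m, m ≠ i → m ≠ j → (w' * Equiv.swap i j) m = w' m := fun m hmi hmj => by
    rw [Perm.mul_apply, Equiv.swap_apply_of_ne_of_ne hmi hmj]
  have ei : (w' * Equiv.swap i j) i = w' j := by
    rw [Perm.mul_apply, Equiv.swap_apply_left]
  have ej : (w' * Equiv.swap i j) j = w' i := by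
    rw [Perm.mul_apply, Equiv.swap_apply_right]
  rw [emu k (Ne.symm h1) (Ne.symm h3), emu l (Ne.symm h2) (Ne.symm h4)] at hvkl'
  have hckl2 : ∀ m, k < m → m < l →
      (w' * Equiv.swap i j) m < w' k ∨ w' l < (w' * Equiv.swap i j) m := fun m hm1 hm2 => by
    have h := hckl' m hm1 hm2
    rwa [emu k (Ne.symm h1) (Ne.symm h3), emu l (Ne.symm h2) (Ne.symm h4)] at h
  -- Claim A : the kl-step condition holds already for w'
  have hckl : ∀ m, k < m → m < l → w' m < w' k ∨ w' l < w' m := by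
    intro m hkm hml
    by_contra hc
    push_neg at hc
    obtain ⟨hc1, hc2⟩ := hc
    have s1 : w' k < w' m := lt_of_le_of_ne hc1 (fun h => (by omega : k ≠ m) (w'.injective h))
    have s2 : w' m < w' l := lt_of_le_of_ne hc2 (fun h => (by omega : m ≠ l) (w'.injective h))
    by_cases hmi : m = i
    · have hki : k < i := hmi ▸ hkm
      have hil : i < l := hmi ▸ hml
      have t1 : w' k < w' i := hmi ▸ s1
      have t2 : w' i < w' l := hmi ▸ s2
      have hd := hckl2 i hki hil
      rw [ei] at hd
      rcases hd with hd | hd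
      · omega
      · rcases lt_trichotomy j l with hjl | hjl | hjl
        · have hd2 := hckl2 j (by omega) hjl
          rw [ej] at hd2
          omega
        · exact h4 hjl
        · have hd3 := hcij l hil hjl
          omega
    · by_cases hmj : m = j
      · have hkj : k < j := hmj ▸ hkm
        have hjl : j < l := hmj ▸ hml
        have t1 : w' k < w' j := hmj ▸ s1
        have t2 : w' j < w' l := hmj ▸ s2
        have hd := hckl2 j hkj hjl
        rw [ej] at hd
        rcases hd with hd | hd
        · rcases lt_trichotomy i k with hik | hik | hik
          · have hd3 := hcij k hik (by omega)
            omega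
          · exact h1 hik
          · have hd2 := hckl2 i hik (by omega)
            rw [ei] at hd2
            omega
        · omega
      · have hd := hckl2 m hkm hml
        rw [emu m hmi hmj] at hd
        omega
  have goal1 : invNum (w' * Equiv.swap k l) = invNum w' + 1 :=
    (swap_step_iff w' k l hkl hfinU).2 ⟨hvkl', hckl⟩
  have e2m : ∀ m, m ≠ k → m ≠ l → (w' * Equiv.swap k l) m = w' m := fun m hmk hml => by
    rw [Perm.mul_apply, Equiv.swap_apply_of_ne_of_ne hmk hml]
  have e2k : (w' * Equiv.swap k l) k = w' l := by
    rw [Perm.mul_apply, Equiv.swap_apply_left]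
  have e2l : (w' * Equiv.swap k l) l = w' k := by
    rw [Perm.mul_apply, Equiv.swap_apply_right]
  -- Claim B : the ij-step condition holds for w' * swap k l
  have hcij2 : ∀ m, i < m → m < j →
      (w' * Equiv.swap k l) m < (w' * Equiv.swap k l) i ∨
        (w' * Equiv.swap k l) j < (w' * Equiv.swap k l) m := by
    intro m him hmj
    rw [e2m i h1 h2, e2m j h3 h4]
    by_cases hmk : m = k
    · have hik : i < k := hmk ▸ him
      have hkj : k < j := hmk ▸ hmj
      rw [hmk, e2k]
      by_contra hc
      push_neg at hc
      obtain ⟨hc1, hc2⟩ := hc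
      have s1 : w' i < w' l := lt_of_le_of_ne hc1 (fun h => h2 (w'.injective h))
      have s2 : w' l < w' j := lt_of_le_of_ne hc2 (fun h => h4 (w'.injective h.symm))
      rcases lt_trichotomy l j with hlj | hlj | hlj
      · have hd := hcij l (by omega) hlj
        omega
      · exact h4 hlj.symm
      · have hd := hckl2 j hkj hlj
        rw [ej] at hd
        rcases hd with hd | hd
        · have hd2 := hcij k hik hkj
          omega
        · omega
    · by_cases hml : m = l
      · have hil : i < l := hml ▸ him
        have hlj : l < j := hml ▸ hmj
        rw [hml, e2l]
        by_contra hc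
        push_neg at hc
        obtain ⟨hc1, hc2⟩ := hc
        have s1 : w' i < w' k := lt_of_le_of_ne hc1 (fun h => h1 (w'.injective h))
        have s2 : w' k < w' j := lt_of_le_of_ne hc2 (fun h => h3 (w'.injective h.symm))
        rcases lt_trichotomy i k with hik | hik | hik
        · have hd := hcij k hik (by omega)
          omega
        · exact h1 hik
        · have hd := hckl2 i hik hil
          rw [ei] at hd
          rcases hd with hd | hd
          · omega
          · have hd2 := hcij l hil hlj
            omega
      · have hd := hcij m him hmj
        rw [e2m m hmk hml]
        omega
  have goal2 : invNum (w' * Equiv.swap k l * Equiv.swap i j) =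
      invNum (w' * Equiv.swap k l) + 1 := by
    refine (swap_step_iff (w' * Equiv.swap k l) i j hij hfinU2).2 ⟨?_, hcij2⟩
    rw [e2m i h1 h2, e2m j h3 h4]
    exact hvij
  exact ⟨goal1, by omega⟩
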